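/- Let p be an odd prime, let m₁, m₂ ∈ (ℤ/pℤ)^× with m₁ ≠ m₂, and suppose m₁ m₂^{−1} = a² for some a ∈ (ℤ/pℤ)^× (necessarily a ≠ 1 and a ≠ −1). Then for every t ∈ ℤ/pℤ, | ∑_{n ∈ ℤ/pℤ} ∑_{(x,y) ∈ (ℤ/pℤ)², x² = m₁ n, y² = m₂ n} e_p( 2(x − y) + t n ) | ≤ 2√p + 1. -/

import Mathlib

open Finset

/-- `e_p(a) = exp(2πi ã / p)` for `a : ZMod p`. -/
noncomputable def ep (p : ℕ) (a : ZMod p) : ℂ :=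
  Complex.exp (2 * Real.pi * Complex.I * (a.val : ℂ) / p)

lemma ep_zero (p : ℕ) [NeZero p] : ep p 0 = 1 := by
  simp [ep]

lemma ep_add (p : ℕ) [NeZero p] (a b : ZMod p) : ep p (a + b) = ep p a * ep p b := by
  unfold ep
  rw [← Complex.exp_add]
  have h : (a + b).val + p * ((a.val + b.val) / p) = a.val + b.val := by
    rw [ZMod.val_add]; exact Nat.mod_add_div _ _
  have hp : (p : ℂ) ≠ 0 := Nat.cast_ne_zero.mpr (NeZero.ne p)
  have hc : (((a+b).val : ℂ)) = (a.val : ℂ) + b.val - p * (((a.val + b.val) / p : ℕ) : ℂ) := by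
    have h' := congrArg (Nat.cast : ℕ → ℂ) h
    push_cast at h'
    linear_combination h'
  rw [hc]
  rw [show 2 * ↑Real.pi * Complex.I * ((a.val:ℂ) + ↑b.val - ↑p * ↑((a.val + b.val) / p)) / ↑p
    = (2 * ↑Real.pi * Complex.I * ↑a.val / ↑p + 2 * ↑Real.pi * Complex.I * ↑b.val / ↑p)
      - ((((a.val + b.val) / p : ℕ) : ℂ)) * (2 * ↑Real.pi * Complex.I) by field_simp]
  rw [Complex.exp_sub]
  have h1 : Complex.exp (((((a.val + b.val) / p : ℕ) : ℂ)) * (2 * ↑Real.pi * Complex.I)) = 1 := by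
    simpa using Complex.exp_int_mul_two_pi_mul_I ((a.val + b.val) / p : ℕ)
  rw [h1, div_one]

lemma ep_eq_one_iff (p : ℕ) [NeZero p] (a : ZMod p) : ep p a = 1 ↔ a = 0 := by
  constructor
  · intro h
    unfold ep at h
    rw [Complex.exp_eq_one_iff] at h
    obtain ⟨n, hn⟩ := h
    have hp : (p : ℂ) ≠ 0 := Nat.cast_ne_zero.mpr (NeZero.ne p)
    have hpi : (2 * (Real.pi:ℂ) * Complex.I) ≠ 0 := by
      simp [Real.pi_ne_zero, Complex.I_ne_zero]
    have h2 : ((a.val : ℂ)/p) = n :=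
      mul_left_cancel₀ hpi (by rw [mul_div_assoc] at hn; linear_combination hn)
    have h3 : (a.val : ℂ) = n * p := by
      rw [div_eq_iff hp] at h2; exact h2
    have hval : (a.val : ℤ) = n * p := by exact_mod_cast h3
    have hdvd : (p : ℤ) ∣ (a.val : ℤ) := Dvd.intro n (by linarith)
    have hdvd' : p ∣ a.val := Int.ofNat_dvd.mp hdvd
    have hlt := ZMod.val_lt a
    exact (ZMod.val_eq_zero a).mp (Nat.eq_zero_of_dvd_of_lt hdvd' hlt)
  · rintro rfl; exact ep_zero p


lemma ep_conj (p : ℕ) [NeZero p] (a : ZMod p) :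
    (starRingEnd ℂ) (ep p a) = ep p (-a) := by
  have h1 : ep p a * ep p (-a) = 1 := by rw [← ep_add]; simp [ep_zero]
  have h2 : (starRingEnd ℂ) (ep p a) = (ep p a)⁻¹ := by
    rw [ep, ← Complex.exp_conj, ← Complex.exp_neg]
    congr 1
    simp only [map_neg, map_div₀, map_mul, map_ofNat, Complex.conj_I,
      Complex.conj_natCast, Complex.conj_ofReal]
    ring
  rw [h2]
  exact (eq_inv_of_mul_eq_one_right h1).symm

lemma ep_ne_zero (p : ℕ) (a : ZMod p) : ep p a ≠ 0 := Complex.exp_ne_zero _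

lemma sum_ep_eq_zero (p : ℕ) [NeZero p] {c : ZMod p} (hc : c ≠ 0) :
    ∑ v : ZMod p, ep p (c * v) = 0 := by
  have key : ∑ v : ZMod p, ep p (c * v) = ep p c * ∑ v : ZMod p, ep p (c * v) := by
    calc ∑ v : ZMod p, ep p (c * v) = ∑ v : ZMod p, ep p (c * ((Equiv.addRight (1:ZMod p)) v)) :=
          (Equiv.sum_comp (Equiv.addRight (1:ZMod p)) (fun v => ep p (c * v))).symm
      _ = ∑ v : ZMod p, ep p c * ep p (c * v) := by
          refine Finset.sum_congr rfl fun v _ => ?_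
          rw [← ep_add]; congr 1
          simp [Equiv.addRight]; ring
      _ = ep p c * ∑ v : ZMod p, ep p (c * v) := by rw [Finset.mul_sum]
  have h1 : ep p c ≠ 1 := fun h => hc ((ep_eq_one_iff p c).mp h)
  have := sub_eq_zero.mpr key.symm
  rw [← sub_one_mul] at this
  rcases mul_eq_zero.mp this with h | h
  · exact absurd (by linear_combination h : ep p c = 1) h1
  · exact h

lemma quad_bound (p : ℕ) [Fact p.Prime] (h2 : (2 : ZMod p) ≠ 0) (d c : ZMod p)
    (h : d ≠ 0 ∨ c ≠ 0) :
    ‖∑ v : ZMod p, ep p (d * v^2 + c * v)‖ ≤ Real.sqrt p := by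
  rcases eq_or_ne d 0 with rfl | hd
  · have hc : c ≠ 0 := h.resolve_left (fun hh => hh rfl)
    simp only [zero_mul, zero_add]
    rw [sum_ep_eq_zero p hc]
    simp [Real.sqrt_nonneg]
  · set S := ∑ v : ZMod p, ep p (d * v^2 + c * v) with hS
    have key : S * (starRingEnd ℂ) S = (p : ℂ) := by
      have hconj : (starRingEnd ℂ) S = ∑ w : ZMod p, ep p (-(d * w^2 + c * w)) := by
        rw [hS, map_sum]
        exact Finset.sum_congr rfl fun w _ => ep_conj p _
      rw [hconj, hS, Finset.sum_mul_sum]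
      have hterm : ∀ v w : ZMod p, ep p (d * v^2 + c * v) * ep p (-(d * w^2 + c * w))
          = ep p ((d * v^2 + c * v) - (d * w^2 + c * w)) := by
        intro v w; rw [← ep_add]; ring_nf
      calc ∑ v : ZMod p, ∑ w : ZMod p,
              ep p (d * v^2 + c * v) * ep p (-(d * w^2 + c * w))
          = ∑ w : ZMod p, ∑ v : ZMod p, ep p ((d * v^2 + c * v) - (d * w^2 + c * w)) := by
            rw [Finset.sum_comm]
            exact Finset.sum_congr rfl fun w _ => Finset.sum_congr rfl fun v _ => hterm v w
        _ = ∑ w : ZMod p, ∑ h : ZMod p, ep p ((d * h^2 + c * h) + (2 * d * h) * w) := by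
            refine Finset.sum_congr rfl fun w _ => ?_
            calc ∑ v : ZMod p, ep p ((d * v^2 + c * v) - (d * w^2 + c * w))
                = ∑ h : ZMod p, ep p ((d * ((Equiv.addLeft w) h)^2 + c * ((Equiv.addLeft w) h))
                    - (d * w^2 + c * w)) :=
                  (Equiv.sum_comp (Equiv.addLeft w)
                    (fun v => ep p ((d * v^2 + c * v) - (d * w^2 + c * w)))).symm
              _ = ∑ h : ZMod p, ep p ((d * h^2 + c * h) + (2 * d * h) * w) := by
                  refine Finset.sum_congr rfl fun h _ => ?_
                  congr 1
                  simp only [Equiv.coe_addLeft]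
                  ring
        _ = ∑ h : ZMod p, ep p (d * h^2 + c * h) * ∑ w : ZMod p, ep p ((2 * d * h) * w) := by
            rw [Finset.sum_comm]
            refine Finset.sum_congr rfl fun h _ => ?_
            rw [Finset.mul_sum]
            exact Finset.sum_congr rfl fun w _ => (ep_add p _ _)
        _ = (p : ℂ) := by
            rw [Finset.sum_eq_single (0 : ZMod p)]
            · simp only [mul_zero, zero_pow, ne_eq, OfNat.ofNat_ne_zero,
                not_false_iff, zero_mul, add_zero, mul_zero]
              simp [ep_zero, Finset.card_univ, ZMod.card]
            · intro h hmem hne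
              have : (2 * d * h) ≠ 0 := by
                intro hh
                rcases mul_eq_zero.mp hh with hh' | hh'
                · rcases mul_eq_zero.mp hh' with h2' | hd'
                  · exact h2 h2'
                  · exact hd hd'
                · exact hne hh'
              rw [sum_ep_eq_zero p this, mul_zero]
            · intro hmem; exact absurd (Finset.mem_univ _) hmem
    have hnormsq : Complex.normSq S = (p : ℝ) := by
      have := Complex.mul_conj S
      rw [key] at this
      exact_mod_cast this.symm
    rw [Complex.norm_def, hnormsq]

lemma sum_ite_or_eq {α : Type*} [Fintype α] [DecidableEq α] (c₁ c₂ : α) (f : α → ℂ) :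
    ∑ x : α, (if x = c₁ ∨ x = c₂ then f x else 0)
    = if c₁ = c₂ then f c₁ else f c₁ + f c₂ := by
  have hfil : Finset.univ.filter (fun x => x = c₁ ∨ x = c₂) = ({c₁, c₂} : Finset α) := by
    ext x; simp
  rw [← Finset.sum_filter, hfil]
  by_cases h : c₁ = c₂
  · subst h
    rw [if_pos rfl]
    simp
  · rw [if_neg h, Finset.sum_pair h]


/-- The complete exponential sum arising in Lemma 5.8: for `m₁ ≠ m₂` units mod `p`
with `m₁ m₂⁻¹` a square, and any `t`,
`|∑_n ∑_{x² = m₁ n, y² = m₂ n} e_p(2(x − y) + t n)| ≤ 2√p + 1`. -/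
theorem stmt14 (p : ℕ) [Fact p.Prime] (hodd : Odd p) (m₁ m₂ : (ZMod p)ˣ) (hne : m₁ ≠ m₂)
    (hsq : ∃ a : (ZMod p)ˣ, m₁ * m₂⁻¹ = a^2) (t : ZMod p) :
    ‖∑ n : ZMod p,
      ∑ xy ∈ Finset.univ.filter (fun xy : ZMod p × ZMod p =>
          xy.1^2 = (m₁ : ZMod p) * n ∧ xy.2^2 = (m₂ : ZMod p) * n),
        ep p (2 * (xy.1 - xy.2) + t * n)‖
      ≤ 2 * Real.sqrt p + 1 := by
  obtain ⟨a, ha⟩ := hsq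
  have hp := (Fact.out : p.Prime)
  have h2 : (2 : ZMod p) ≠ 0 := by
    intro h
    have : p ∣ 2 := by exact_mod_cast (ZMod.natCast_eq_zero_iff 2 p).mp (by exact_mod_cast h)
    have hp2 : p = 2 := (Nat.prime_dvd_prime_iff_eq hp Nat.prime_two).mp this
    rw [hp2] at hodd
    simp [Nat.odd_iff] at hodd
  set A : ZMod p := (a : ZMod p) with hA
  have hAunit : A ≠ 0 := a.ne_zero
  have hAsq : A^2 = (m₁ : ZMod p) * ((m₂⁻¹ : (ZMod p)ˣ) : ZMod p) := by
    rw [hA]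
    exact_mod_cast congrArg (Units.val) ha |>.symm
  have hA1 : A ≠ 1 := by
    intro h
    apply hne
    have : a = 1 := Units.ext (by rw [Units.val_one]; exact h)
    rw [this, one_pow] at ha
    exact (mul_inv_eq_one.mp ha)
  have hAm1 : A ≠ -1 := by
    intro h
    apply hne
    have hsq1 : A^2 = 1 := by rw [h]; ring
    have : (a^2 : (ZMod p)ˣ) = 1 :=
      Units.ext (by rw [Units.val_pow_eq_pow_val, Units.val_one]; exact hsq1)
    rw [← ha] at this
    exact (mul_inv_eq_one.mp this)
  set D : ZMod p := t * ((m₂⁻¹ : (ZMod p)ˣ) : ZMod p) with hD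
  set c₁ : ZMod p := 2 * (A - 1) with hc₁
  set c₂ : ZMod p := -(2 * (A + 1)) with hc₂
  have hc₁ne : c₁ ≠ 0 := by
    rw [hc₁]
    exact mul_ne_zero h2 (sub_ne_zero.mpr hA1)
  have hc₂ne : c₂ ≠ 0 := by
    rw [hc₂]
    intro h
    exact (mul_ne_zero h2 (fun hh => hAm1 (by linear_combination hh))) (neg_eq_zero.mp h)
  set S₁ : ℂ := ∑ v : ZMod p, ep p (D * v^2 + c₁ * v) with hS₁
  set S₂ : ℂ := ∑ v : ZMod p, ep p (D * v^2 + c₂ * v) with hS₂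
  -- define g
  set g : ZMod p × ZMod p → ℂ :=
    fun xy => ep p (2 * (xy.1 - xy.2) + t * (((m₂⁻¹ : (ZMod p)ˣ) : ZMod p) * xy.2^2)) with hg
  have step1 : (∑ n : ZMod p,
      ∑ xy ∈ Finset.univ.filter (fun xy : ZMod p × ZMod p =>
          xy.1^2 = (m₁ : ZMod p) * n ∧ xy.2^2 = (m₂ : ZMod p) * n),
        ep p (2 * (xy.1 - xy.2) + t * n))
      = ∑ xy : ZMod p × ZMod p,
          (if xy.1 = A * xy.2 ∨ xy.1 = -(A * xy.2) then g xy else 0) := by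
    simp_rw [Finset.sum_filter]
    rw [Finset.sum_comm]
    refine Finset.sum_congr rfl fun xy _ => ?_
    have hcond : ∀ n : ZMod p,
        (xy.1^2 = (m₁ : ZMod p) * n ∧ xy.2^2 = (m₂ : ZMod p) * n)
        ↔ ((xy.1 = A * xy.2 ∨ xy.1 = -(A * xy.2)) ∧ n = ((m₂⁻¹ : (ZMod p)ˣ) : ZMod p) * xy.2^2) := by
      intro n
      constructor
      · rintro ⟨h1, h2'⟩
        have hm2 : ((m₂⁻¹ : (ZMod p)ˣ) : ZMod p) * (m₂ : ZMod p) = 1 := by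
          have := congrArg (Units.val) (inv_mul_cancel m₂)
          rwa [Units.val_mul, Units.val_one] at this
        have hn : n = ((m₂⁻¹ : (ZMod p)ˣ) : ZMod p) * xy.2^2 := by
          rw [h2', ← mul_assoc, hm2, one_mul]
        refine ⟨?_, hn⟩
        have hx2 : xy.1^2 = (A * xy.2)^2 := by
          rw [h1, hn, mul_pow, hAsq]; ring
        have : (xy.1 - A * xy.2) * (xy.1 + A * xy.2) = 0 := by linear_combination hx2
        rcases mul_eq_zero.mp this with h | h
        · exact Or.inl (sub_eq_zero.mp h)
        · exact Or.inr (by linear_combination h)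
      · rintro ⟨hx, rfl⟩
        have hm2 : (m₂ : ZMod p) * (((m₂⁻¹ : (ZMod p)ˣ)) : ZMod p) = 1 := by
          have := congrArg (Units.val) (mul_inv_cancel m₂)
          rwa [Units.val_mul, Units.val_one] at this
        constructor
        · have hx2 : xy.1^2 = (A * xy.2)^2 := by
            rcases hx with h | h <;> rw [h] <;> ring
          rw [hx2, mul_pow, hAsq]; ring
        · rw [← mul_assoc, hm2, one_mul]
    calc ∑ n : ZMod p, (if xy.1^2 = (m₁ : ZMod p) * n ∧ xy.2^2 = (m₂ : ZMod p) * n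
            then ep p (2 * (xy.1 - xy.2) + t * n) else 0)
        = ∑ n : ZMod p, (if ((xy.1 = A * xy.2 ∨ xy.1 = -(A * xy.2))
              ∧ n = ((m₂⁻¹ : (ZMod p)ˣ) : ZMod p) * xy.2^2)
            then ep p (2 * (xy.1 - xy.2) + t * n) else 0) := by
          refine Finset.sum_congr rfl fun n _ => ?_
          rw [if_congr (hcond n) rfl rfl]
      _ = (if xy.1 = A * xy.2 ∨ xy.1 = -(A * xy.2) then g xy else 0) := by
          by_cases hQ : xy.1 = A * xy.2 ∨ xy.1 = -(A * xy.2)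
          · simp only [hQ, true_and, if_true]
            rw [Finset.sum_ite_eq' Finset.univ (((m₂⁻¹ : (ZMod p)ˣ) : ZMod p) * xy.2^2)
              (fun n => ep p (2 * (xy.1 - xy.2) + t * n))]
            rw [if_pos (Finset.mem_univ _)]
          · rw [if_neg hQ]
            exact Finset.sum_eq_zero fun n _ => if_neg (fun hh => hQ hh.1)
  rw [step1]
  have hpzero : ep p 0 = 1 := ep_zero p
  have hg00 : g ((0 : ZMod p), (0 : ZMod p)) = 1 := by
    rw [hg]
    simp only []
    rw [show 2 * ((0:ZMod p) - 0) + t * (((m₂⁻¹ : (ZMod p)ˣ) : ZMod p) * (0:ZMod p)^2) = 0 by ring]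
    exact hpzero
  have key : ∀ y : ZMod p,
      (∑ x : ZMod p, if x = A * y ∨ x = -(A * y) then g (x, y) else 0)
      = (g (A * y, y) + g (-(A * y), y)) - (if y = 0 then 1 else 0) := by
    intro y
    rw [sum_ite_or_eq]
    by_cases hy : y = 0
    · subst hy
      rw [if_pos (by rw [mul_zero, neg_zero]), if_pos rfl]
      rw [mul_zero, neg_zero, hg00]
      ring
    · have hAy : A * y ≠ -(A * y) := by
        intro h
        have : 2 * A * y = 0 := by linear_combination h
        rcases mul_eq_zero.mp this with h' | h'
        · rcases mul_eq_zero.mp h' with h'' | h''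
          · exact h2 h''
          · exact hAunit h''
        · exact hy h'
      rw [if_neg hAy, if_neg hy, sub_zero]
  have step2 : (∑ xy : ZMod p × ZMod p,
      (if xy.1 = A * xy.2 ∨ xy.1 = -(A * xy.2) then g xy else 0)) = S₁ + S₂ - 1 := by
    rw [Fintype.sum_prod_type_right]
    calc (∑ y : ZMod p, ∑ x : ZMod p, if x = A * y ∨ x = -(A * y) then g (x, y) else 0)
        = ∑ y : ZMod p, ((g (A * y, y) + g (-(A * y), y)) - (if y = 0 then 1 else 0)) :=
          Finset.sum_congr rfl fun y _ => key y
      _ = (∑ y : ZMod p, g (A * y, y)) + (∑ y : ZMod p, g (-(A * y), y))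
            - (∑ y : ZMod p, if y = 0 then (1:ℂ) else 0) := by
          rw [Finset.sum_sub_distrib, Finset.sum_add_distrib]
      _ = S₁ + S₂ - 1 := by
          have e1 : (∑ y : ZMod p, g (A * y, y)) = S₁ := by
            refine Finset.sum_congr rfl fun y _ => ?_
            show ep p (2 * (A * y - y) + t * (((m₂⁻¹ : (ZMod p)ˣ) : ZMod p) * y^2))
              = ep p (D * y^2 + c₁ * y)
            congr 1
            rw [hD, hc₁]
            ring
          have e2 : (∑ y : ZMod p, g (-(A * y), y)) = S₂ := by
            refine Finset.sum_congr rfl fun y _ => ?_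
            show ep p (2 * (-(A * y) - y) + t * (((m₂⁻¹ : (ZMod p)ˣ) : ZMod p) * y^2))
              = ep p (D * y^2 + c₂ * y)
            congr 1
            rw [hD, hc₂]
            ring
          have e3 : (∑ y : ZMod p, if y = 0 then (1:ℂ) else 0) = 1 := by
            rw [Finset.sum_ite_eq' Finset.univ (0 : ZMod p) (fun _ => (1:ℂ))]
            simp
          rw [e1, e2, e3]
  rw [step2]
  have b1 : ‖S₁‖ ≤ Real.sqrt p := quad_bound p h2 D c₁ (Or.inr hc₁ne)
  have b2 : ‖S₂‖ ≤ Real.sqrt p := quad_bound p h2 D c₂ (Or.inr hc₂ne)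
  have h1 := norm_sub_le (S₁ + S₂) (1 : ℂ)
  have h2' := norm_add_le S₁ S₂
  simp only [norm_one] at h1 h2'
  have habs1 : ‖(1 : ℂ)‖ = 1 := by simp
  linarith
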